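/- For every c ∈ ℂ there exist R > 0 and an injective holomorphic map φ defined on { z ∈ ℂ : |z| > R } such that: |z| > R implies |z² + c| > R; φ(z² + c) = φ(z)² for all z with |z| > R; and φ(z)/z → 1 as |z| → ∞ (Böttcher coordinate of f_c(z) = z² + c at infinity, conjugating f_c to z ↦ z²). -/

import Mathlib

open Complex Filter Topology

noncomputable section Stmt13Aux

namespace Stmt13Aux

/-- The complex absolute value, as the norm. -/
abbrev Complex.abs : AbsoluteValue ℂ ℝ := NormedField.toAbsoluteValue ℂ

variable (c : ℂ)

/-- The quadratic polynomial. -/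
def fc (z : ℂ) : ℂ := z ^ 2 + c

/-- The escape radius. -/
def Rc : ℝ := Complex.abs c + 4

/-- Logarithmic terms. -/
def wk (k : ℕ) (z : ℂ) : ℂ := Complex.log (1 + c / ((fc c)^[k] z) ^ 2)

def ak (k : ℕ) (z : ℂ) : ℂ := (1/2 : ℂ) ^ (k + 1) * wk c k z

def gc (z : ℂ) : ℂ := ∑' k, ak c k z

/-- The Böttcher coordinate. -/
def phi (z : ℂ) : ℂ := z * Complex.exp (gc c z)

lemma four_le_Rc : (4 : ℝ) ≤ Rc c := by
  have := Complex.abs.nonneg c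
  simp only [Rc]
  linarith

lemma Rc_pos : (0 : ℝ) < Rc c := lt_of_lt_of_le (by norm_num) (four_le_Rc c)

variable {c}

lemma escape {z : ℂ} (hz : Rc c < Complex.abs z) :
    2 * Complex.abs z ≤ Complex.abs (fc c z) := by
  have h1 : Complex.abs (z ^ 2) ≤ Complex.abs (z ^ 2 + c) + Complex.abs (-c) := by
    have := Complex.abs.add_le (z ^ 2 + c) (-c)
    simpa using this
  rw [map_neg_eq_map, map_pow] at h1
  have hc : (0 : ℝ) ≤ Complex.abs c := Complex.abs.nonneg c
  have hz' : Complex.abs c + 4 < Complex.abs z := hz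
  have : Complex.abs (fc c z) = Complex.abs (z ^ 2 + c) := rfl
  rw [this]
  nlinarith [Complex.abs.nonneg z]

lemma escape' {z : ℂ} (hz : Rc c < Complex.abs z) : Rc c < Complex.abs (fc c z) := by
  have := escape hz
  have := Rc_pos c
  linarith

lemma iter_ge {z : ℂ} (hz : Rc c < Complex.abs z) (k : ℕ) :
    2 ^ k * Complex.abs z ≤ Complex.abs ((fc c)^[k] z) := by
  induction k with
  | zero => simp
  | succ n ih =>
    rw [Function.iterate_succ_apply']
    have hn : Rc c < Complex.abs ((fc c)^[n] z) := by
      have h1 : (1:ℝ) ≤ 2 ^ n := one_le_pow₀ (by norm_num)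
      nlinarith [Rc_pos c]
    have := escape hn
    have h1 : (2:ℝ) ^ (n+1) * Complex.abs z = 2 * (2 ^ n * Complex.abs z) := by ring
    nlinarith

lemma iter_gt {z : ℂ} (hz : Rc c < Complex.abs z) (k : ℕ) :
    Rc c < Complex.abs ((fc c)^[k] z) := by
  have h1 : (1:ℝ) ≤ 2 ^ k := one_le_pow₀ (by norm_num)
  have := iter_ge hz k
  nlinarith [Rc_pos c]

lemma small {u : ℂ} (hu : Rc c < Complex.abs u) :
    Complex.abs (c / u ^ 2) ≤ 1 / 2 := by
  have h : Complex.abs (c / u ^ 2) = Complex.abs c / (Complex.abs u) ^ 2 := by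
    rw [map_div₀, map_pow]
  rw [h]
  have hc : (0 : ℝ) ≤ Complex.abs c := Complex.abs.nonneg c
  have hu4 : (4 : ℝ) < Complex.abs u := lt_of_le_of_lt (four_le_Rc c) hu
  have hu' : Complex.abs c + 4 < Complex.abs u := hu
  rw [div_le_iff₀ (by positivity)]
  nlinarith

lemma abs_div_sq {u : ℂ} : Complex.abs (c / u ^ 2) = Complex.abs c / (Complex.abs u) ^ 2 := by
  rw [map_div₀, map_pow]

lemma wk_norm {z : ℂ} (hz : Rc c < Complex.abs z) (k : ℕ) :
    Complex.abs (wk c k z) ≤ 2 * (Complex.abs c / (Complex.abs ((fc c)^[k] z)) ^ 2) := by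
  have hk := iter_gt hz k
  have hsm : ‖c / ((fc c)^[k] z) ^ 2‖ ≤ 1 / 2 := small hk
  have := Complex.norm_log_one_add_half_le_self hsm
  have h2 : ‖c / ((fc c)^[k] z) ^ 2‖ = Complex.abs c / (Complex.abs ((fc c)^[k] z)) ^ 2 :=
    abs_div_sq
  rw [h2] at this hsm
  calc Complex.abs (wk c k z) ≤ 3/2 * (Complex.abs c / (Complex.abs ((fc c)^[k] z)) ^ 2) := this
    _ ≤ 2 * (Complex.abs c / (Complex.abs ((fc c)^[k] z)) ^ 2) := by
        have : (0:ℝ) ≤ Complex.abs c / (Complex.abs ((fc c)^[k] z)) ^ 2 := by positivity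
        linarith

lemma ak_norm {z : ℂ} (hz : Rc c < Complex.abs z) (k : ℕ) :
    ‖ak c k z‖ ≤ (Complex.abs c / (Complex.abs z) ^ 2) * (1/8 : ℝ) ^ k := by
  have h1 : ‖ak c k z‖ = (1/2 : ℝ) ^ (k+1) * Complex.abs (wk c k z) := by
    rw [ak, norm_mul, norm_pow]
    norm_num
    rfl
  have hw := wk_norm hz k
  have hiter := iter_ge hz k
  have hzpos : (0:ℝ) < Complex.abs z := lt_trans (Rc_pos c) hz
  have hfk : (0:ℝ) < Complex.abs ((fc c)^[k] z) := lt_trans (Rc_pos c) (iter_gt hz k)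
  have h2 : Complex.abs c / (Complex.abs ((fc c)^[k] z)) ^ 2
      ≤ Complex.abs c / ((2:ℝ) ^ k * Complex.abs z) ^ 2 := by
    apply div_le_div_of_nonneg_left (Complex.abs.nonneg c) (by positivity)
    exact pow_le_pow_left₀ (by positivity) hiter 2
  have h3 : (1/2 : ℝ) ^ (k+1) * (2 * (Complex.abs c / ((2:ℝ) ^ k * Complex.abs z) ^ 2))
      = (Complex.abs c / (Complex.abs z) ^ 2) * (1/8 : ℝ) ^ k := by
    have h8 : (1/8 : ℝ) ^ k = (1/2 : ℝ) ^ k * (1/4 : ℝ) ^ k := by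
      rw [← mul_pow]; norm_num
    have h4 : ((2:ℝ) ^ k * Complex.abs z) ^ 2 = 4 ^ k * (Complex.abs z) ^ 2 := by
      rw [mul_pow, ← pow_mul, pow_mul']
      norm_num
    rw [h8, h4, pow_succ]
    have h4k : ((4:ℝ) ^ k) ≠ 0 := by positivity
    have hz2 : ((Complex.abs z) ^ 2) ≠ 0 := by positivity
    simp only [one_div_pow]
    field_simp
  calc ‖ak c k z‖ = (1/2 : ℝ) ^ (k+1) * Complex.abs (wk c k z) := h1
    _ ≤ (1/2 : ℝ) ^ (k+1) * (2 * (Complex.abs c / ((2:ℝ) ^ k * Complex.abs z) ^ 2)) := by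
        apply mul_le_mul_of_nonneg_left _ (by positivity)
        calc Complex.abs (wk c k z)
            ≤ 2 * (Complex.abs c / (Complex.abs ((fc c)^[k] z)) ^ 2) := hw
          _ ≤ 2 * (Complex.abs c / ((2:ℝ) ^ k * Complex.abs z) ^ 2) := by linarith
    _ = (Complex.abs c / (Complex.abs z) ^ 2) * (1/8 : ℝ) ^ k := h3

lemma summable_ak {z : ℂ} (hz : Rc c < Complex.abs z) : Summable (fun k => ak c k z) := by
  apply Summable.of_norm_bounded (Summable.mul_left _ (summable_geometric_of_lt_one
    (by norm_num) (by norm_num : (1/8 : ℝ) < 1)))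
  exact ak_norm hz

lemma gc_norm {z : ℂ} (hz : Rc c < Complex.abs z) :
    Complex.abs (gc c z) ≤ 2 * (Complex.abs c / (Complex.abs z) ^ 2) := by
  have hs : Summable (fun k => ‖ak c k z‖) :=
    Summable.of_nonneg_of_le (fun _ => norm_nonneg _) (ak_norm hz)
      (Summable.mul_left _ (summable_geometric_of_lt_one (by norm_num)
        (by norm_num : (1/8 : ℝ) < 1)))
  have h1 : Complex.abs (gc c z) ≤ ∑' k, ‖ak c k z‖ := norm_tsum_le_tsum_norm hs
  have h2 : ∑' k, ‖ak c k z‖ ≤ ∑' k, (Complex.abs c / (Complex.abs z) ^ 2) * (1/8 : ℝ) ^ k := by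
    apply Summable.tsum_le_tsum (ak_norm hz) hs
    exact Summable.mul_left _ (summable_geometric_of_lt_one (by norm_num) (by norm_num))
  have h3 : ∑' k : ℕ, (Complex.abs c / (Complex.abs z) ^ 2) * (1/8 : ℝ) ^ k
      = (Complex.abs c / (Complex.abs z) ^ 2) * (8/7 : ℝ) := by
    rw [tsum_mul_left, tsum_geometric_of_lt_one (by norm_num) (by norm_num)]
    norm_num
  have h4 : (0:ℝ) ≤ Complex.abs c / (Complex.abs z) ^ 2 := by positivity
  nlinarith

lemma gc_le_one {z : ℂ} (hz : Rc c < Complex.abs z) : Complex.abs (gc c z) ≤ 1 := by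
  have h1 := gc_norm hz
  have hc : (0 : ℝ) ≤ Complex.abs c := Complex.abs.nonneg c
  have hz4 : Complex.abs c + 4 < Complex.abs z := hz
  have hzpos : (0:ℝ) < Complex.abs z := lt_trans (Rc_pos c) hz
  have h2 : 2 * Complex.abs c ≤ (Complex.abs z) ^ 2 := by nlinarith
  have h3 : 2 * (Complex.abs c / (Complex.abs z) ^ 2) = (2 * Complex.abs c) / (Complex.abs z) ^ 2 := by
    ring
  have h4 : (2 * Complex.abs c) / (Complex.abs z) ^ 2 ≤ 1 :=
    (div_le_one (by positivity)).mpr h2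
  linarith

lemma phi_close {z : ℂ} (hz : Rc c < Complex.abs z) :
    Complex.abs (phi c z - z) ≤ 4 * Complex.abs c / Complex.abs z := by
  have hzpos : (0:ℝ) < Complex.abs z := lt_trans (Rc_pos c) hz
  have h1 : phi c z - z = z * (Complex.exp (gc c z) - 1) := by rw [phi]; ring
  rw [h1, map_mul]
  have h2 : Complex.abs (Complex.exp (gc c z) - 1) ≤ 2 * Complex.abs (gc c z) :=
    Complex.norm_exp_sub_one_le (gc_le_one hz)
  have h3 := gc_norm hz
  calc Complex.abs z * Complex.abs (Complex.exp (gc c z) - 1)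
      ≤ Complex.abs z * (2 * (2 * (Complex.abs c / (Complex.abs z) ^ 2))) := by nlinarith
    _ = 4 * Complex.abs c / Complex.abs z := by field_simp; ring

lemma feq {z : ℂ} (hz : Rc c < Complex.abs z) : phi c (fc c z) = (phi c z) ^ 2 := by
  have hzpos : (0:ℝ) < Complex.abs z := lt_trans (Rc_pos c) hz
  have hzne : z ≠ 0 := by
    intro h; rw [h] at hzpos; simp at hzpos
  have hsum : Summable (fun k => (2:ℂ) * ak c k z) := (summable_ak hz).mul_left 2
  have hterm : ∀ k, (2:ℂ) * ak c k z = (1/2 : ℂ) ^ k * wk c k z := by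
    intro k
    rw [ak, pow_succ]
    ring
  have h2g : 2 * gc c z = wk c 0 z + gc c (fc c z) := by
    have e1 : 2 * gc c z = ∑' k, (2:ℂ) * ak c k z := by
      rw [gc, tsum_mul_left]
    rw [e1, hsum.tsum_eq_zero_add]
    congr 1
    · rw [hterm 0, pow_zero, one_mul]
    · rw [gc]
      apply tsum_congr
      intro k
      rw [hterm (k+1)]
      simp only [ak, wk, Function.iterate_succ_apply]
  have hne : (1 : ℂ) + c / z ^ 2 ≠ 0 := by
    intro h
    have heq : c / z ^ 2 = -1 := by linear_combination h
    have habs := small hz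
    rw [heq] at habs
    simp at habs
    norm_num at habs
  have hw0 : Complex.exp (wk c 0 z) = 1 + c / z ^ 2 := by
    rw [wk]
    simp only [Function.iterate_zero, id_eq]
    exact Complex.exp_log hne
  have key : (phi c z) ^ 2 = (z ^ 2 + c) * Complex.exp (gc c (fc c z)) := by
    rw [phi]
    have : (z * Complex.exp (gc c z)) ^ 2 = z ^ 2 * Complex.exp (2 * gc c z) := by
      rw [mul_pow, ← Complex.exp_nat_mul]
      norm_num
    rw [this, h2g, Complex.exp_add, hw0]
    field_simp
  rw [key, phi]
  rfl

lemma phi_iter {z : ℂ} (hz : Rc c < Complex.abs z) (n : ℕ) :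
    phi c ((fc c)^[n] z) = (phi c z) ^ (2 ^ n) := by
  induction n with
  | zero => simp
  | succ n ih =>
    rw [Function.iterate_succ_apply', feq (iter_gt hz n), ih, ← pow_mul, pow_succ]

lemma coll_bound {u v : ℂ} (hu : Rc c < Complex.abs u) (hv : Rc c < Complex.abs v)
    (h : phi c u = phi c v) :
    Complex.abs (u - v) ≤ 4 * Complex.abs c / Complex.abs u + 4 * Complex.abs c / Complex.abs v := by
  have e : u - v = (u - phi c u) + (phi c v - v) := by rw [h]; ring
  calc Complex.abs (u - v) ≤ Complex.abs (u - phi c u) + Complex.abs (phi c v - v) := by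
        rw [e]; exact Complex.abs.add_le _ _
    _ ≤ 4 * Complex.abs c / Complex.abs u + 4 * Complex.abs c / Complex.abs v := by
        have h1 := phi_close hu
        have h2 := phi_close hv
        rw [← Complex.abs.map_neg (u - phi c u)] at *
        simp only [neg_sub] at *
        linarith

lemma injective_phi : Set.InjOn (phi c) {z : ℂ | Rc c < Complex.abs z} := by
  intro z hz w hw h
  simp only [Set.mem_setOf_eq] at hz hw
  have hR := Rc_pos c
  have hR4 := four_le_Rc c
  have hc : (0 : ℝ) ≤ Complex.abs c := Complex.abs.nonneg c
  -- collisions at all iterates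
  have hcoll : ∀ n, Complex.abs ((fc c)^[n] z - (fc c)^[n] w) ≤ 8 * Complex.abs c / Rc c := by
    intro n
    have hphin : phi c ((fc c)^[n] z) = phi c ((fc c)^[n] w) := by
      rw [phi_iter hz n, phi_iter hw n, h]
    have h1 := coll_bound (iter_gt hz n) (iter_gt hw n) hphin
    have hz' : Rc c < Complex.abs ((fc c)^[n] z) := iter_gt hz n
    have hw' : Rc c < Complex.abs ((fc c)^[n] w) := iter_gt hw n
    have b1 : 4 * Complex.abs c / Complex.abs ((fc c)^[n] z) ≤ 4 * Complex.abs c / Rc c :=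
      div_le_div_of_nonneg_left (by positivity) hR (le_of_lt hz')
    have b2 : 4 * Complex.abs c / Complex.abs ((fc c)^[n] w) ≤ 4 * Complex.abs c / Rc c :=
      div_le_div_of_nonneg_left (by positivity) hR (le_of_lt hw')
    have : 4 * Complex.abs c / Rc c + 4 * Complex.abs c / Rc c = 8 * Complex.abs c / Rc c := by
      ring
    linarith
  -- growth
  have hgrow : ∀ n, (Rc c) ^ n * Complex.abs (z - w) ≤
      Complex.abs ((fc c)^[n] z - (fc c)^[n] w) := by
    intro n
    induction n with
    | zero => simp
    | succ n ih =>
      rw [Function.iterate_succ_apply', Function.iterate_succ_apply']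
      have e : fc c ((fc c)^[n] z) - fc c ((fc c)^[n] w)
          = ((fc c)^[n] z - (fc c)^[n] w) * ((fc c)^[n] z + (fc c)^[n] w) := by
        simp only [fc]; ring
      rw [e, map_mul]
      have hz' : Rc c < Complex.abs ((fc c)^[n] z) := iter_gt hz n
      have hsum : Rc c ≤ Complex.abs ((fc c)^[n] z + (fc c)^[n] w) := by
        have e2 : (fc c)^[n] z + (fc c)^[n] w
            = 2 * (fc c)^[n] z - ((fc c)^[n] z - (fc c)^[n] w) := by ring
        have h3 : Complex.abs (2 * (fc c)^[n] z) ≤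
            Complex.abs ((fc c)^[n] z + (fc c)^[n] w)
              + Complex.abs ((fc c)^[n] z - (fc c)^[n] w) := by
          have := Complex.abs.add_le ((fc c)^[n] z + (fc c)^[n] w)
            ((fc c)^[n] z - (fc c)^[n] w)
          have e3 : ((fc c)^[n] z + (fc c)^[n] w) + ((fc c)^[n] z - (fc c)^[n] w)
              = 2 * (fc c)^[n] z := by ring
          rw [e3] at this
          exact this
        have h4 : Complex.abs (2 * (fc c)^[n] z) = 2 * Complex.abs ((fc c)^[n] z) := by
          rw [map_mul]; norm_num
          left; show ‖(2:ℂ)‖ = 2; norm_num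
        have h5 := hcoll n
        -- 8|c|/R ≤ R since R² ≥ 8|c|
        have h6 : 8 * Complex.abs c / Rc c ≤ Rc c := by
          rw [div_le_iff₀ hR]
          have : Rc c = Complex.abs c + 4 := rfl
          nlinarith
        rw [h4] at h3
        linarith
      calc (Rc c) ^ (n+1) * Complex.abs (z - w)
          = ((Rc c) ^ n * Complex.abs (z - w)) * Rc c := by ring
        _ ≤ Complex.abs ((fc c)^[n] z - (fc c)^[n] w) * Rc c :=
            mul_le_mul_of_nonneg_right ih (le_of_lt hR)
        _ ≤ Complex.abs ((fc c)^[n] z - (fc c)^[n] w)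
              * Complex.abs ((fc c)^[n] z + (fc c)^[n] w) := by
            apply mul_le_mul_of_nonneg_left hsum (Complex.abs.nonneg _)
  -- conclude
  by_contra hne
  have habs : 0 < Complex.abs (z - w) := by
    rw [AbsoluteValue.pos_iff]
    exact sub_ne_zero_of_ne hne
  obtain ⟨n, hn⟩ := pow_unbounded_of_one_lt ((8 * Complex.abs c / Rc c) / Complex.abs (z - w))
    (show (1:ℝ) < Rc c by linarith)
  have h1 := hgrow n
  have h2 := hcoll n
  rw [div_lt_iff₀ habs] at hn
  linarith

lemma isOpen_region : IsOpen {z : ℂ | Rc c < Complex.abs z} :=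
  isOpen_lt continuous_const continuous_norm

lemma diff_fc_iter (k : ℕ) : Differentiable ℂ ((fc c)^[k]) := by
  apply Differentiable.iterate
  intro z
  exact ((differentiableAt_pow 2).add_const c)

lemma diff_ak (k : ℕ) :
    DifferentiableOn ℂ (fun z => ak c k z) {z : ℂ | Rc c < Complex.abs z} := by
  intro z hz
  simp only [Set.mem_setOf_eq] at hz
  apply DifferentiableAt.differentiableWithinAt
  have hfkne : ((fc c)^[k] z) ^ 2 ≠ 0 := by
    apply pow_ne_zero
    intro h
    have := iter_gt hz k
    rw [h] at this
    simp at this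
    linarith [Rc_pos c]
  have hinner : DifferentiableAt ℂ (fun z => 1 + c / ((fc c)^[k] z) ^ 2) z := by
    apply (differentiableAt_const 1).add
    exact (differentiableAt_const c).div (((diff_fc_iter k) z).pow 2) hfkne
  have hmem : 1 + c / ((fc c)^[k] z) ^ 2 ∈ Complex.slitPlane := by
    apply Complex.mem_slitPlane_of_norm_lt_one
    calc ‖c / ((fc c)^[k] z) ^ 2‖ ≤ 1/2 := small (iter_gt hz k)
      _ < 1 := by norm_num
  have hlog : DifferentiableAt ℂ (fun z => wk c k z) z :=
    (Complex.differentiableAt_log hmem).comp z hinner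
  exact hlog.const_mul _

lemma diff_gc : DifferentiableOn ℂ (gc c) {z : ℂ | Rc c < Complex.abs z} := by
  have hu : Summable (fun k : ℕ => (Complex.abs c / (Rc c) ^ 2) * (1/8 : ℝ) ^ k) :=
    Summable.mul_left _ (summable_geometric_of_lt_one (by norm_num) (by norm_num))
  have hbound : ∀ (k : ℕ) (z : ℂ), z ∈ {z : ℂ | Rc c < Complex.abs z} →
      ‖ak c k z‖ ≤ (Complex.abs c / (Rc c) ^ 2) * (1/8 : ℝ) ^ k := by
    intro k z hz
    simp only [Set.mem_setOf_eq] at hz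
    calc ‖ak c k z‖ ≤ (Complex.abs c / (Complex.abs z) ^ 2) * (1/8 : ℝ) ^ k := ak_norm hz k
      _ ≤ (Complex.abs c / (Rc c) ^ 2) * (1/8 : ℝ) ^ k := by
          apply mul_le_mul_of_nonneg_right _ (by positivity)
          apply div_le_div_of_nonneg_left (Complex.abs.nonneg c) (pow_pos (Rc_pos c) 2)
          exact pow_le_pow_left₀ (le_of_lt (Rc_pos c)) (le_of_lt hz) 2
  have huni := tendstoUniformlyOn_tsum hu hbound
  apply huni.tendstoLocallyUniformlyOn.differentiableOn _ isOpen_region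
  apply Filter.Eventually.of_forall
  intro t
  exact DifferentiableOn.fun_sum (fun k _ => diff_ak k)

lemma diff_phi : DifferentiableOn ℂ (phi c) {z : ℂ | Rc c < Complex.abs z} :=
  differentiableOn_id.mul diff_gc.cexp

lemma tendsto_phi : Tendsto (fun z => phi c z / z) (Bornology.cobounded ℂ) (𝓝 1) := by
  have hev : ∀ᶠ z : ℂ in Bornology.cobounded ℂ, Rc c < Complex.abs z := by
    have := tendsto_norm_cobounded_atTop (E := ℂ)
    filter_upwards [this.eventually_gt_atTop (Rc c)] with z hz
    exact hz
  have hg : Tendsto (gc c) (Bornology.cobounded ℂ) (𝓝 0) := by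
    refine squeeze_zero_norm' ?_
      (a := fun z : ℂ => 2 * (Complex.abs c / (Complex.abs z) ^ 2)) ?_
    · filter_upwards [hev] with z hz
      exact gc_norm hz
    · have h1 : Tendsto (fun z : ℂ => (Complex.abs z) ^ 2) (Bornology.cobounded ℂ) atTop := by
        have := tendsto_norm_cobounded_atTop (E := ℂ)
        exact (tendsto_pow_atTop (two_ne_zero)).comp this
      have h2 : Tendsto (fun z : ℂ => Complex.abs c / (Complex.abs z) ^ 2)
          (Bornology.cobounded ℂ) (𝓝 0) := Tendsto.div_atTop tendsto_const_nhds h1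
      have := h2.const_mul (2:ℝ)
      simpa using this
  have hexp : Tendsto (fun z => Complex.exp (gc c z)) (Bornology.cobounded ℂ) (𝓝 1) := by
    have := (Complex.continuous_exp.tendsto 0).comp hg
    simpa [Function.comp_def] using this
  apply hexp.congr'
  filter_upwards [hev] with z hz
  have hzne : z ≠ 0 := by
    intro h
    rw [h] at hz
    simp at hz
    linarith [Rc_pos c]
  rw [phi]
  field_simp

end Stmt13Aux

end Stmt13Aux

/-- For every `c ∈ ℂ` there exist `R > 0` and an injective holomorphic
map `φ` on `{ z : |z| > R }` such that `|z| > R → |z² + c| > R`, `φ (z² + c) = (φ z)²`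
for all `|z| > R`, and `φ z / z → 1` as `|z| → ∞` (the Böttcher coordinate of
`f_c(z) = z² + c` at infinity, conjugating `f_c` to `z ↦ z²`). -/
theorem stmt_13 (c : ℂ) :
    ∃ R : ℝ, 0 < R ∧
    ∃ φ : ℂ → ℂ,
      Set.InjOn φ {z : ℂ | R < ‖z‖} ∧
      DifferentiableOn ℂ φ {z : ℂ | R < ‖z‖} ∧
      (∀ z : ℂ, R < ‖z‖ → R < ‖z ^ 2 + c‖) ∧
      (∀ z : ℂ, R < ‖z‖ → φ (z ^ 2 + c) = (φ z) ^ 2) ∧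
      Filter.Tendsto (fun z => φ z / z) (Bornology.cobounded ℂ) (nhds 1) := by
  refine ⟨Stmt13Aux.Rc c, Stmt13Aux.Rc_pos c, Stmt13Aux.phi c,
    Stmt13Aux.injective_phi, Stmt13Aux.diff_phi, ?_, ?_, Stmt13Aux.tendsto_phi⟩
  · intro z hz
    exact Stmt13Aux.escape' hz
  · intro z hz
    exact Stmt13Aux.feq hz
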